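/- (Schlesinger transformation T₂ for Painlevé III′.) Let (q, p, H) solve the Painlevé III′ Hamiltonian system with parameters v1, v2 ∈ ℂ on an open set U ⊆ ℂ with 0 ∉ U, and assume q(s) ≠ 0 and q(s)·(q(s)·p(s) − (v1+v2)/2) + s ≠ 0 for all s ∈ U. Define p̃(s) := (q(s)/s)·((v1+v2)/2 − q(s)·p(s)) and q̃(s) := s/q(s) − ((2 + v1 − v2)/2)·s / ( q(s)·(q(s)·p(s) − (v1+v2)/2) + s ). Then (q̃, p̃) solves the Painlevé III′ Hamiltonian system with parameters (v1 + 1, v2 − 1) on U, and its Hamiltonian H̃ satisfies s·H̃(s) = s·H(s) − q(s)·p(s) for all s ∈ U. -/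

import Mathlib

open Complex

/-- `(q, p, H)` solves the Painlevé III′ Hamiltonian system with parameters
`v1, v2` on an open set `U ⊆ ℂ` with `0 ∉ U`. -/
def SolvesPIII' (v1 v2 : ℂ) (U : Set ℂ) (q p H : ℂ → ℂ) : Prop :=
  IsOpen U ∧ (0 : ℂ) ∉ U ∧
    DifferentiableOn ℂ q U ∧ DifferentiableOn ℂ p U ∧
    (∀ s ∈ U, s * H s =
      q s ^ 2 * p s ^ 2 - (q s ^ 2 + v1 * q s - s) * p s
        + (1 / 2) * (v1 + v2) * q s) ∧
    (∀ s ∈ U, s * deriv q s = 2 * q s ^ 2 * p s - q s ^ 2 - v1 * q s + s) ∧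
    (∀ s ∈ U, s * deriv p s =
      -2 * q s * p s ^ 2 + 2 * q s * p s + v1 * p s - (1 / 2) * (v1 + v2))

lemma auxQode (v1 v2 s Q P qp pp d QT PT : ℂ)
    (hdd : d = Q*(Q*P-(v1+v2)/2)+s)
    (hq' : s*qp = 2*Q^2*P - Q^2 - v1*Q + s)
    (hp' : s*pp = -2*Q*P^2 + 2*Q*P + v1*P - (1/2)*(v1+v2))
    (hQT : QT*(Q*d) = s*d - (2+v1-v2)/2*(s*Q))
    (hPT : PT*s = Q*((v1+v2)/2 - Q*P))
    (hQ : Q ≠ 0) (hd : d ≠ 0) (hs : s ≠ 0) :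
    s * ((1*Q - s*qp)/Q^2 -
      ((2+v1-v2)/2*1*d - (2+v1-v2)/2*s*(qp*(Q*P-(v1+v2)/2) + Q*(qp*P+Q*pp) + 1))/d^2)
    = 2*QT^2*PT - QT^2 - (v1+1)*QT + s := by
  rw [← sub_eq_zero]
  field_simp
  linear_combination (1/2 : ℂ) * (((8)*Q*d + (8)*Q*d*QT + (-16)*Q*d*QT*PT + (8)*s*d + (-16)*s*d*PT + (-8)*s*Q + (16)*s*Q*PT + (4)*v2*s*Q + (-8)*v2*s*Q*PT + (8)*v1*Q*d + (-4)*v1*s*Q + (8)*v1*s*Q*PT) * hQT + ((-16)*s*d^2 + (32)*s*Q*d + (-16)*s*Q^2 + (-16)*v2*s*Q*d + (16)*v2*s*Q^2 + (-4)*v2^2*s*Q^2 + (16)*v1*s*Q*d + (-16)*v1*s*Q^2 + (8)*v1*v2*s*Q^2 + (-4)*v1^2*s*Q^2) * hPT + ((-8)*s*d^2 + (16)*s*Q^3*P + (-4)*v2*s*Q^2 + (-8)*v2*s*Q^3*P + (2)*v2^2*s*Q^2 + (-4)*v1*s*Q^2 + (8)*v1*s*Q^3*P + (-2)*v1^2*s*Q^2)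 * hq' + ((8)*s*Q^4 + (-4)*v2*s*Q^4 + (4)*v1*s*Q^4) * hp' + ((16)*s*Q*d + (-16)*s*Q^2 + (-16)*s*Q^3*P + (-8)*v2*s*Q*d + (16)*v2*s*Q^2 + (8)*v2*s*Q^3*P + (-4)*v2^2*s*Q^2 + (8)*v1*s*Q*d + (-8)*v1*s*Q^2 + (-8)*v1*s*Q^3*P + (4)*v1*v2*s*Q^2) * hdd)

lemma auxPode (v1 v2 s Q P qp pp d QT PT : ℂ)
    (hdd : d = Q*(Q*P-(v1+v2)/2)+s)
    (hq' : s*qp = 2*Q^2*P - Q^2 - v1*Q + s)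
    (hp' : s*pp = -2*Q*P^2 + 2*Q*P + v1*P - (1/2)*(v1+v2))
    (hQT : QT*(Q*d) = s*d - (2+v1-v2)/2*(s*Q))
    (hPT : PT*s = Q*((v1+v2)/2 - Q*P))
    (hQ : Q ≠ 0) (hd : d ≠ 0) (hs : s ≠ 0) :
    s * (((qp * ((v1+v2)/2 - Q*P) + Q * (0 - (qp*P + Q*pp))) * s - Q * ((v1+v2)/2 - Q*P) * 1) / s^2)
    = -2*QT*PT^2 + 2*QT*PT + (v1+1)*PT - (1/2)*((v1+1)+(v2-1)) := by
  rw [← sub_eq_zero]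
  field_simp
  apply mul_left_cancel₀ (mul_ne_zero (mul_ne_zero hs hQ) hd)
  rw [mul_zero]
  linear_combination (1/2 : ℂ) * (((-8)*s^2*PT + (8)*s^2*PT^2) * hQT + ((-4)*s*Q*d + (-8)*s*Q^2*P*d + (8)*s*Q^3*P + (-8)*s^2*d + (8)*s^2*d*PT + (8)*s^2*Q + (-8)*s^2*Q*PT + (4)*v2*s*Q*d + (-4)*v2*s*Q^2 + (-4)*v2*s*Q^3*P + (-4)*v2*s^2*Q + (4)*v2*s^2*Q*PT + (2)*v2^2*s*Q^2 + (-4)*v1*s*Q^2 + (4)*v1*s*Q^3*P + (4)*v1*s^2*Q + (-4)*v1*s^2*Q*PT + (-2)*v1^2*s*Q^2) * hPT + ((-8)*s*Q^2*P*d + (2)*v2*s*Q*d + (2)*v1*s*Q*d) * hq' + ((-4)*s*Q^3*d) * hp' + ((8)*s*Q^3*P + (-4)*v2*s*Q^2 + (-4)*v2*s*Q^3*P + (2)*v2^2*s*Q^2 + (-4)*v1*s*Q^2 + (4)*v1*s*Q^3*P + (-2)*v1^2*s*Q^2) * hdd)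

lemma auxHam (v1 v2 s Q P d QT PT : ℂ)
    (hdd : d = Q*(Q*P-(v1+v2)/2)+s)
    (hQT : QT*(Q*d) = s*d - (2+v1-v2)/2*(s*Q))
    (hPT : PT*s = Q*((v1+v2)/2 - Q*P))
    (hQ : Q ≠ 0) (hd : d ≠ 0) (hs : s ≠ 0) :
    s * ((QT^2*PT^2 - (QT^2 + (v1+1)*QT - s)*PT + (1/2)*((v1+1)+(v2-1))*QT)/s)
    = (Q^2*P^2 - (Q^2 + v1*Q - s)*P + 1/2*(v1+v2)*Q) - Q*P := by
  rw [← sub_eq_zero]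
  field_simp
  apply mul_left_cancel₀ (pow_ne_zero 2 (mul_ne_zero hs (mul_ne_zero hQ hd)))
  rw [mul_zero]
  linear_combination (1/2 : ℂ) * (((-4)*s^2*Q*d*PT + (-4)*s^2*Q*d*QT*PT + (4)*s^2*Q*d*QT*PT^2 + (-4)*s^3*d*PT + (4)*s^3*d*PT^2 + (4)*s^3*Q*PT + (-4)*s^3*Q*PT^2 + (2)*v2*s^2*Q*d + (-2)*v2*s^3*Q*PT + (2)*v2*s^3*Q*PT^2 + (2)*v1*s^2*Q*d + (-4)*v1*s^2*Q*d*PT + (2)*v1*s^3*Q*PT + (-2)*v1*s^3*Q*PT^2) * hQT + ((-4)*s^2*Q*d^2 + (4)*s^2*Q^2*d + (4)*s^2*Q^2*d^2 + (-4)*s^2*Q^2*P*d^2 + (8)*s^2*Q^3*P*d + (-4)*s^2*Q^4*P + (-4)*s^3*d^2 + (4)*s^3*d^2*PT + (8)*s^3*Q*d + (-8)*s^3*Q*d*PT + (-4)*s^3*Q^2 + (4)*s^3*Q^2*PT + (2)*v2*s^2*Q*d^2 + (-6)*v2*s^2*Q^2*d + (2)*v2*s^2*Q^3 + (-4)*v2*s^2*Q^3*P*d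 + (4)*v2*s^2*Q^4*P + (-4)*v2*s^3*Q*d + (4)*v2*s^3*Q*d*PT + (4)*v2*s^3*Q^2 + (-4)*v2*s^3*Q^2*PT + (2)*v2^2*s^2*Q^2*d + (-2)*v2^2*s^2*Q^3 + (-1)*v2^2*s^2*Q^4*P + (-1)*v2^2*s^3*Q^2 + v2^2*s^3*Q^2*PT + (1/2)*v2^3*s^2*Q^3 + (-2)*v1*s^2*Q*d^2 + (2)*v1*s^2*Q^2*d + (2)*v1*s^2*Q^3 + (4)*v1*s^2*Q^3*P*d + (-4)*v1*s^2*Q^4*P + (4)*v1*s^3*Q*d + (-4)*v1*s^3*Q*d*PT + (-4)*v1*s^3*Q^2 + (4)*v1*s^3*Q^2*PT + (-2)*v1*v2*s^2*Q^2*d + (2)*v1*v2*s^2*Q^4*P + (2)*v1*v2*s^3*Q^2 + (-2)*v1*v2*s^3*Q^2*PT + (-1/2)*v1*v2^2*s^2*Q^3 + (2)*v1^2*s^2*Q^3 + (-1)*v1^2*s^2*Q^4*P + (-1)*v1^2*s^3*Q^2 + v1^2*s^3*Q^2*PT + (-1/2)*v1^2*v2*s^2*Q^3 + (1/2)*v1^3*s^2*Q^3)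 * hPT + ((8)*s^2*Q^3*P*d + (-4)*s^2*Q^4*P + (-2)*v2*s^2*Q^2*d + (2)*v2*s^2*Q^3 + (-4)*v2*s^2*Q^3*P*d + (4)*v2*s^2*Q^4*P + v2^2*s^2*Q^2*d + (-2)*v2^2*s^2*Q^3 + (-1)*v2^2*s^2*Q^4*P + (1/2)*v2^3*s^2*Q^3 + (-2)*v1*s^2*Q^2*d + (2)*v1*s^2*Q^3 + (4)*v1*s^2*Q^3*P*d + (-4)*v1*s^2*Q^4*P + (2)*v1*v2*s^2*Q^4*P + (-1/2)*v1*v2^2*s^2*Q^3 + (-1)*v1^2*s^2*Q^2*d + (2)*v1^2*s^2*Q^3 + (-1)*v1^2*s^2*Q^4*P + (-1/2)*v1^2*v2*s^2*Q^3 + (1/2)*v1^3*s^2*Q^3) * hdd)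

/-- Schlesinger transformation `T₂` for Painlevé III′: it maps a solution with
parameters `(v1, v2)` to one with parameters `(v1+1, v2−1)`, and acts on the
Hamiltonian by `s·H̃(s) = s·H(s) − q(s)p(s)`. -/
theorem painleveIIIprime_schlesinger_T2 (v1 v2 : ℂ) (U : Set ℂ)
    (q p H : ℂ → ℂ)
    (hsol : SolvesPIII' v1 v2 U q p H)
    (hq : ∀ s ∈ U, q s ≠ 0)
    (hden : ∀ s ∈ U, q s * (q s * p s - (v1 + v2) / 2) + s ≠ 0)
    (qt pt : ℂ → ℂ)
    (hpt : ∀ s ∈ U, pt s = (q s / s) * ((v1 + v2) / 2 - q s * p s))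
    (hqt : ∀ s ∈ U, qt s =
      s / q s - ((2 + v1 - v2) / 2) * s /
        (q s * (q s * p s - (v1 + v2) / 2) + s)) :
    ∃ Ht : ℂ → ℂ,
      SolvesPIII' (v1 + 1) (v2 - 1) U qt pt Ht ∧
      ∀ s ∈ U, s * Ht s = s * H s - q s * p s := by
  obtain ⟨hU, h0, hqd, hpd, hH, hQode, hPode⟩ := hsol
  have hs0 : ∀ s ∈ U, (s : ℂ) ≠ 0 := fun s hs h => h0 (h ▸ hs)
  have hPT : ∀ s ∈ U, pt s * s = q s * ((v1 + v2) / 2 - q s * p s) := by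
    intro s hs
    have hsne := hs0 s hs
    rw [hpt s hs]
    field_simp
  have hQT : ∀ s ∈ U, qt s * (q s * (q s * (q s * p s - (v1 + v2) / 2) + s)) =
      s * (q s * (q s * p s - (v1 + v2) / 2) + s) - (2 + v1 - v2) / 2 * (s * q s) := by
    intro s hs
    have hsne := hs0 s hs
    have hqne := hq s hs
    have hdne := hden s hs
    rw [hqt s hs, div_sub_div _ _ hqne hdne,
      div_mul_cancel₀ _ (mul_ne_zero hqne hdne)]
    ring
  have master : ∀ s ∈ U,
      ∃ dq dp : ℂ, HasDerivAt qt dq s ∧ HasDerivAt pt dp s ∧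
        s * dq = 2 * qt s ^ 2 * pt s - qt s ^ 2 - (v1 + 1) * qt s + s ∧
        s * dp = -2 * qt s * pt s ^ 2 + 2 * qt s * pt s + (v1 + 1) * pt s
            - (1 / 2) * ((v1 + 1) + (v2 - 1)) := by
    intro s hs
    have hsne := hs0 s hs
    have hqne := hq s hs
    have hdne := hden s hs
    have hmem : U ∈ nhds s := hU.mem_nhds hs
    have hqda : HasDerivAt q (deriv q s) s :=
      (hqd.differentiableAt hmem).hasDerivAt
    have hpda : HasDerivAt p (deriv p s) s :=
      (hpd.differentiableAt hmem).hasDerivAt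
    -- derivative of pt
    have hgp := ((hqda.mul ((hasDerivAt_const s ((v1 + v2) / 2)).sub
        (hqda.mul hpda))).div (hasDerivAt_id s) hsne)
    have hevp : pt =ᶠ[nhds s] fun x => q x * ((v1 + v2) / 2 - q x * p x) / id x :=
      Filter.eventuallyEq_of_mem hmem (fun x hx => by
        simp only [id_eq]; rw [hpt x hx]; ring)
    have hptda := hgp.congr_of_eventuallyEq hevp
    -- derivative of qt
    have hdena : HasDerivAt (fun x => q x * (q x * p x - (v1 + v2) / 2) + x)
        (deriv q s * (q s * p s - (v1 + v2) / 2)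
          + q s * (deriv q s * p s + q s * deriv p s) + 1) s := by
      exact (hqda.mul ((hqda.mul hpda).sub_const ((v1 + v2) / 2))).add
        (hasDerivAt_id s)
    have hgq := ((hasDerivAt_id s).div hqda hqne).sub
      ((((hasDerivAt_id s).const_mul ((2 + v1 - v2) / 2)).div hdena hdne))
    have hevq : qt =ᶠ[nhds s] fun x => id x / q x -
        ((2 + v1 - v2) / 2) * id x / (q x * (q x * p x - (v1 + v2) / 2) + x) :=
      Filter.eventuallyEq_of_mem hmem (fun x hx => by
        simp only [id_eq]; rw [hqt x hx])
    have hqtda := hgq.congr_of_eventuallyEq hevq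
    refine ⟨_, _, hqtda, hptda, ?_, ?_⟩
    · simp only [id_eq]
      linear_combination auxQode v1 v2 s (q s) (p s) (deriv q s) (deriv p s)
        (q s * (q s * p s - (v1 + v2) / 2) + s) (qt s) (pt s) rfl
        (hQode s hs) (hPode s hs) (hQT s hs) (hPT s hs) hqne hdne hsne
    · simp only [id_eq, Pi.mul_apply, Pi.sub_apply]
      linear_combination auxPode v1 v2 s (q s) (p s) (deriv q s) (deriv p s)
        (q s * (q s * p s - (v1 + v2) / 2) + s) (qt s) (pt s) rfl
        (hQode s hs) (hPode s hs) (hQT s hs) (hPT s hs) hqne hdne hsne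
  refine ⟨fun s => (qt s ^ 2 * pt s ^ 2 - (qt s ^ 2 + (v1 + 1) * qt s - s) * pt s
      + (1 / 2) * ((v1 + 1) + (v2 - 1)) * qt s) / s,
    ⟨hU, h0, ?_, ?_, ?_, ?_, ?_⟩, ?_⟩
  · intro s hs
    obtain ⟨dq, dp, hq1, hp1, _, _⟩ := master s hs
    exact hq1.differentiableAt.differentiableWithinAt
  · intro s hs
    obtain ⟨dq, dp, hq1, hp1, _, _⟩ := master s hs
    exact hp1.differentiableAt.differentiableWithinAt
  · intro s hs
    rw [mul_comm, div_mul_cancel₀ _ (hs0 s hs)]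
  · intro s hs
    obtain ⟨dq, dp, hq1, hp1, h1, _⟩ := master s hs
    rw [hq1.deriv]; exact h1
  · intro s hs
    obtain ⟨dq, dp, hq1, hp1, _, h2⟩ := master s hs
    rw [hp1.deriv]; exact h2
  · intro s hs
    rw [hH s hs]
    linear_combination auxHam v1 v2 s (q s) (p s)
      (q s * (q s * p s - (v1 + v2) / 2) + s) (qt s) (pt s) rfl
      (hQT s hs) (hPT s hs) (hq s hs) (hden s hs) (hs0 s hs)
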